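/- Let x_1,…,x_n ∈ ℝ^d with ‖x_i‖ ≤ 1, labels y_i ∈ {±1}, and suppose (1/n)‖X‖² ≤ σ² where X = [x_1,…,x_n]. For any w ∈ ℝ^d define ∇L̂_A(w) = -(1/b) ∑_{i∈A} χ_i(w) y_i x_i where χ_i(w) = 1 if y_i⟨w, x_i⟩ < 1 and 0 otherwise. Then for A a uniformly random b-subset of {1,…,n}, E[‖∇L̂_A(w)‖²] ≤ β_b / b, where β_b = 1 + (b-1)(nσ²-1)/(n-1). -/

import Mathlib

open Finset

lemma count_fixed {α : Type*} [DecidableEq α] (s t : Finset α) (b : ℕ)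
    (hts : t ⊆ s) (htb : t.card ≤ b) :
    ((powersetCard b s).filter fun A => t ⊆ A).card
      = (s.card - t.card).choose (b - t.card) := by
  rw [← card_sdiff_of_subset hts, ← Finset.card_powersetCard (b - t.card) (s \ t)]
  apply Finset.card_nbij' (fun A => A \ t) (fun B => B ∪ t)
  · intro A hA
    simp only [mem_coe, mem_filter, mem_powersetCard] at hA
    obtain ⟨⟨hAs, hAb⟩, htA⟩ := hA
    rw [mem_coe, mem_powersetCard]
    exact ⟨sdiff_subset_sdiff hAs Subset.rfl, by rw [card_sdiff_of_subset htA, hAb]⟩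
  · intro B hB
    rw [mem_coe, mem_powersetCard] at hB
    obtain ⟨hBs, hBc⟩ := hB
    have hdisj : Disjoint B t := disjoint_of_subset_left hBs sdiff_disjoint
    simp only [mem_coe, mem_filter, mem_powersetCard]
    refine ⟨⟨union_subset (hBs.trans sdiff_subset) hts, ?_⟩, subset_union_right⟩
    rw [card_union_of_disjoint hdisj, hBc, Nat.sub_add_cancel htb]
  · intro A hA
    simp only [mem_coe, mem_filter] at hA
    exact sdiff_union_of_subset hA.2
  · intro B hB
    rw [mem_coe, mem_powersetCard] at hB
    have hdisj : Disjoint B t := disjoint_of_subset_left hB.1 sdiff_disjoint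
    exact union_sdiff_cancel_right hdisj

lemma count1 {n : ℕ} (b : ℕ) (hb : 1 ≤ b) (i : Fin n) :
    (((powersetCard b (univ : Finset (Fin n))).filter fun A => i ∈ A).card : ℕ)
      = (n - 1).choose (b - 1) := by
  have := count_fixed (univ : Finset (Fin n)) {i} b (subset_univ _) (by simpa using hb)
  simpa [singleton_subset_iff] using this

lemma choose_key {m c : ℕ} :
    Nat.choose m c * ((m + 2) * (m + 1)) = Nat.choose (m + 2) (c + 2) * ((c + 2) * (c + 1)) := by
  have h1 := Nat.add_one_mul_choose_eq m c
  have h2 := Nat.add_one_mul_choose_eq (m + 1) (c + 1)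
  nlinarith [h1, h2]

lemma count2 {n : ℕ} (b : ℕ) (i j : Fin n) (hij : i ≠ j) (hb : b ≤ n) :
    ((((powersetCard b (univ : Finset (Fin n))).filter fun A => i ∈ A ∧ j ∈ A).card : ℝ))
        * ((n : ℝ) * ((n : ℝ) - 1))
      = (n.choose b : ℝ) * ((b : ℝ) * ((b : ℝ) - 1)) := by
  rcases le_or_gt 2 b with h2 | h2
  · have hcard : ({i, j} : Finset (Fin n)).card = 2 := card_pair hij
    have hc := count_fixed (univ : Finset (Fin n)) {i, j} b (subset_univ _)
      (by rw [hcard]; exact h2)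
    rw [card_univ, Fintype.card_fin, hcard] at hc
    have hpred : (((powersetCard b (univ : Finset (Fin n))).filter fun A => i ∈ A ∧ j ∈ A))
        = ((powersetCard b (univ : Finset (Fin n))).filter
            fun A => ({i, j} : Finset (Fin n)) ⊆ A) := by
      apply filter_congr; intro A _; simp [insert_subset_iff]
    rw [hpred, hc]
    have h2n : 2 ≤ n := h2.trans hb
    obtain ⟨m, rfl⟩ : ∃ m, n = m + 2 := ⟨n - 2, by omega⟩
    obtain ⟨c, rfl⟩ : ∃ c, b = c + 2 := ⟨b - 2, by omega⟩
    simp only [Nat.add_sub_cancel]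
    have key := choose_key (m := m) (c := c)
    push_cast
    calc ((Nat.choose m c : ℝ)) * (((m : ℝ) + 2) * (((m : ℝ) + 2) - 1))
        = ((Nat.choose m c * ((m + 2) * (m + 1)) : ℕ) : ℝ) := by push_cast; ring
      _ = ((Nat.choose (m + 2) (c + 2) * ((c + 2) * (c + 1)) : ℕ) : ℝ) := by rw [key]
      _ = ((m + 2).choose (c + 2) : ℝ) * (((c : ℝ) + 2) * (((c : ℝ) + 2) - 1)) := by
          push_cast; ring
  · have hempty : (((powersetCard b (univ : Finset (Fin n))).filter
        fun A => i ∈ A ∧ j ∈ A)) = ∅ := by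
      apply filter_eq_empty_iff.mpr
      intro A hA
      rw [mem_powersetCard] at hA
      rintro ⟨hi, hj⟩
      have hsub : ({i, j} : Finset (Fin n)) ⊆ A := by
        simp [insert_subset_iff, hi, hj]
      have := card_le_card hsub
      rw [card_pair hij, hA.2] at this
      omega
    rw [hempty]
    interval_cases b
    · simp
    · simp

lemma swap_diag {n b : ℕ} (g : Fin n → ℝ) :
    ∑ A ∈ powersetCard b (univ : Finset (Fin n)), ∑ i ∈ A, g i
      = ∑ i, (((powersetCard b (univ : Finset (Fin n))).filter fun A => i ∈ A).card : ℝ) * g i := by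
  have h1 : ∀ A ∈ powersetCard b (univ : Finset (Fin n)),
      ∑ i ∈ A, g i = ∑ i : Fin n, if i ∈ A then g i else 0 := by
    intro A _
    rw [← sum_filter, filter_mem_eq_inter, univ_inter]
  rw [sum_congr rfl h1, sum_comm]
  refine sum_congr rfl fun i _ => ?_
  rw [← sum_filter, sum_const, nsmul_eq_mul]

lemma swap_offdiag {n b : ℕ} (f : Fin n → Fin n → ℝ) :
    ∑ A ∈ powersetCard b (univ : Finset (Fin n)), ∑ i ∈ A, ∑ j ∈ A.erase i, f i j
      = ∑ i : Fin n, ∑ j ∈ univ.erase i,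
          (((powersetCard b (univ : Finset (Fin n))).filter
              fun A => i ∈ A ∧ j ∈ A).card : ℝ) * f i j := by
  have h1 : ∀ A ∈ powersetCard b (univ : Finset (Fin n)),
      ∑ i ∈ A, ∑ j ∈ A.erase i, f i j
        = ∑ i : Fin n, ∑ j ∈ univ.erase i, if i ∈ A ∧ j ∈ A then f i j else 0 := by
    intro A _
    rw [show (∑ i ∈ A, ∑ j ∈ A.erase i, f i j)
        = ∑ i : Fin n, if i ∈ A then ∑ j ∈ A.erase i, f i j else 0 from by
      rw [← sum_filter, filter_mem_eq_inter, univ_inter]]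
    refine sum_congr rfl fun i _ => ?_
    by_cases hi : i ∈ A
    · simp only [hi, if_true, true_and]
      have hAe : A.erase i = (univ.erase i).filter (· ∈ A) := by
        ext j; simp [mem_erase, and_comm]
      rw [hAe, sum_filter]
    · simp [hi]
  rw [sum_congr rfl h1, sum_comm]
  refine sum_congr rfl fun i _ => ?_
  rw [sum_comm]
  refine sum_congr rfl fun j _ => ?_
  rw [← sum_filter, sum_const, nsmul_eq_mul]

set_option maxHeartbeats 1000000 in
lemma aux_norm_sum_le (n d : ℕ) (hn : 0 < n) (x : Fin n → EuclideanSpace ℝ (Fin d))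
    (X : Matrix (Fin d) (Fin n) ℝ) (hX : ∀ i j, X j i = x i j)
    (σ2 : ℝ) (hσ0 : 0 ≤ σ2)
    (hspec : (1 / (n : ℝ)) *
        ‖LinearMap.toContinuousLinearMap (Matrix.toEuclideanLin X)‖ ^ 2 ≤ σ2)
    (c : Fin n → ℝ) (hc : ∀ i, |c i| ≤ 1) :
    ‖∑ i, c i • x i‖ ^ 2 ≤ (n:ℝ) * (n:ℝ) * σ2 := by
  have hNpos : (0:ℝ) < n := by exact_mod_cast hn
  obtain ⟨T, hTdef⟩ : ∃ T, T = LinearMap.toContinuousLinearMap (Matrix.toEuclideanLin X) :=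
    ⟨_, rfl⟩
  rw [← hTdef] at hspec
  have hT2 : ‖T‖ ^ 2 ≤ (n:ℝ) * σ2 := by
    have h := mul_le_mul_of_nonneg_left hspec hNpos.le
    rw [← mul_assoc, mul_one_div, div_self hNpos.ne', one_mul] at h
    linarith
  obtain ⟨cv, hcv⟩ : ∃ cv : EuclideanSpace ℝ (Fin n),
      cv = (WithLp.equiv 2 (Fin n → ℝ)).symm c := ⟨_, rfl⟩
  have happ : T cv = ∑ i, c i • x i := by
    rw [hTdef]
    show Matrix.toEuclideanLin X cv = ∑ i, c i • x i
    rw [Matrix.toEuclideanLin_apply, hcv, WithLp.equiv_symm_apply, WithLp.ofLp_toLp]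
    ext j
    have h1 : (∑ i, c i • x i) j = ∑ i, c i * x i j := by simp
    have h2 : (WithLp.toLp 2 (X.mulVec c)) j = ∑ i, X j i * c i := by
      simp [Matrix.mulVec, dotProduct]
    rw [h1, h2]
    exact sum_congr rfl fun i _ => by rw [hX i j]; ring
  have hle := T.le_opNorm cv
  have hnc : ‖cv‖ ^ 2 ≤ (n : ℝ) := by
    rw [EuclideanSpace.norm_eq, Real.sq_sqrt (by positivity)]
    calc ∑ i, ‖cv i‖ ^ 2 ≤ ∑ _i : Fin n, (1:ℝ) := by
          apply sum_le_sum
          intro i _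
          rw [hcv]
          have hcvi : ‖((WithLp.equiv 2 (Fin n → ℝ)).symm c) i‖ = |c i| := Real.norm_eq_abs _
          rw [hcvi]
          nlinarith [hc i, abs_nonneg (c i)]
      _ = (n : ℝ) := by simp
  rw [← happ]
  have hnσ : 0 ≤ (n:ℝ) * σ2 := by positivity
  calc ‖T cv‖ ^ 2 ≤ (‖T‖ * ‖cv‖) ^ 2 := by
        nlinarith [hle, norm_nonneg (T cv), norm_nonneg cv, T.opNorm_nonneg]
    _ = ‖T‖ ^ 2 * ‖cv‖ ^ 2 := by ring
    _ ≤ ((n:ℝ) * σ2) * (n:ℝ) := mul_le_mul hT2 hnc (by positivity) hnσ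
    _ = (n:ℝ) * (n:ℝ) * σ2 := by ring

lemma final_ineq (N B C0 C1 σ2 D S : ℝ) (hN1 : 0 < N - 1) (hB1 : 1 ≤ B)
    (hBN : B ≤ N) (hC0 : 0 < C0) (hC1 : C1 * N = C0 * B)
    (hD0 : 0 ≤ D) (hDN : D ≤ N) (hS0 : 0 ≤ S) (hSN : S ≤ N * N * σ2) :
    ((1 / B) ^ 2 * (C1 * D + (C0 * B * (B - 1) / (N * (N - 1))) * (S - D))) / C0
      ≤ (1 + (B - 1) * (N * σ2 - 1) / (N - 1)) / B := by
  have hB : (0:ℝ) < B := by linarith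
  have hN : (0:ℝ) < N := by linarith
  set K : ℝ := C0 * B * (B - 1) / (N * (N - 1)) with hK
  have hK0 : 0 ≤ K := by
    rw [hK]; have : (0:ℝ) ≤ B - 1 := by linarith
    positivity
  have hKC1 : K ≤ C1 := by
    rw [hK, div_le_iff₀ (by positivity)]
    have e1 : C1 * (N * (N - 1)) = C0 * B * (N - 1) := by linear_combination (N - 1) * hC1
    have e2 : C0 * B * (B - 1) ≤ C0 * B * (N - 1) :=
      mul_le_mul_of_nonneg_left (by linarith) (by positivity)
    linarith
  have hmono : C1 * D + K * (S - D) ≤ C1 * N + K * (N * N * σ2 - N) := by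
    nlinarith [mul_nonneg (sub_nonneg.mpr hKC1) (sub_nonneg.mpr hDN),
      mul_le_mul_of_nonneg_left hSN hK0]
  calc ((1 / B) ^ 2 * (C1 * D + K * (S - D))) / C0
      ≤ ((1 / B) ^ 2 * (C1 * N + K * (N * N * σ2 - N))) / C0 := by gcongr
    _ = (1 + (B - 1) * (N * σ2 - 1) / (N - 1)) / B := by
        rw [hK]
        field_simp
        linear_combination (N - 1) * hC1

set_option maxHeartbeats 2000000 in
/-- Lemma 2: for data with `‖x_i‖ ≤ 1` and `(1/n)‖X‖² ≤ σ²` (spectral norm of the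
data matrix), the expected squared norm of the mini-batch subgradient of the
hinge loss is at most `β_b / b`. -/
theorem stmt2 (n b d : ℕ) (hn : 2 ≤ n) (hb1 : 1 ≤ b) (hbn : b ≤ n)
    (x : Fin n → EuclideanSpace ℝ (Fin d)) (y : Fin n → ℝ)
    (hy : ∀ i, y i = 1 ∨ y i = -1) (hx : ∀ i, ‖x i‖ ≤ 1)
    (X : Matrix (Fin d) (Fin n) ℝ) (hX : ∀ i j, X j i = x i j)
    (σ2 : ℝ) (hσl : 1 / (n : ℝ) ≤ σ2) (hσu : σ2 ≤ 1)
    (hspec : (1 / (n : ℝ)) *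
        ‖LinearMap.toContinuousLinearMap (Matrix.toEuclideanLin X)‖ ^ 2 ≤ σ2)
    (w : EuclideanSpace ℝ (Fin d)) :
    (∑ A ∈ Finset.powersetCard b (Finset.univ : Finset (Fin n)),
        ‖(-(1 / (b : ℝ))) • ∑ i ∈ A,
            (if y i * (inner ℝ w (x i) : ℝ) < 1 then (1 : ℝ) else 0) • (y i • x i)‖ ^ 2)
      / (n.choose b : ℝ)
    ≤ (1 + ((b : ℝ) - 1) * ((n : ℝ) * σ2 - 1) / ((n : ℝ) - 1)) / (b : ℝ) := by
  have hNpos : (0:ℝ) < n := by positivity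
  have hBpos : (0:ℝ) < b := by exact_mod_cast hb1
  have hN1 : (0:ℝ) < (n:ℝ) - 1 := by
    have : (2:ℝ) ≤ n := by exact_mod_cast hn
    linarith
  have hBN : (b:ℝ) ≤ n := by exact_mod_cast hbn
  have hC0pos : (0:ℝ) < (n.choose b : ℝ) := by
    exact_mod_cast Nat.choose_pos hbn
  have hσ0 : 0 ≤ σ2 := le_trans (by positivity) hσl
  set c : Fin n → ℝ := fun i => (if y i * (inner ℝ w (x i) : ℝ) < 1 then (1 : ℝ) else 0) * y i
    with hcdef
  set v : Fin n → EuclideanSpace ℝ (Fin d) := fun i => c i • x i with hvdef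
  have hterm : ∀ i, (if y i * (inner ℝ w (x i) : ℝ) < 1 then (1 : ℝ) else 0) • (y i • x i)
      = v i := by
    intro i
    rw [hvdef]
    simp only [hcdef, smul_smul]
  have hcabs : ∀ i, |c i| ≤ 1 := by
    intro i
    rcases hy i with h | h <;> simp only [hcdef, h] <;> split <;> norm_num
  have hvnorm : ∀ i, ‖v i‖ ≤ 1 := by
    intro i
    rw [hvdef]
    calc ‖c i • x i‖ = |c i| * ‖x i‖ := by rw [norm_smul, Real.norm_eq_abs]
      _ ≤ 1 * 1 := by
          exact mul_le_mul (hcabs i) (hx i) (norm_nonneg _) zero_le_one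
      _ = 1 := one_mul 1
  set f : Fin n → Fin n → ℝ := fun i j => (inner ℝ (v i) (v j) : ℝ) with hfdef
  have hexpand : ∀ A : Finset (Fin n), ‖∑ i ∈ A, v i‖ ^ 2 = ∑ i ∈ A, ∑ j ∈ A, f i j := by
    intro A
    rw [← real_inner_self_eq_norm_sq, sum_inner]
    exact sum_congr rfl fun i _ => inner_sum _ _ _
  -- relation C1 * n = C0 * b
  have hC1 : (((n - 1).choose (b - 1) : ℕ) : ℝ) * (n : ℝ) = (n.choose b : ℝ) * (b : ℝ) := by
    obtain ⟨m, hm⟩ : ∃ m, n = m + 1 := ⟨n - 1, by omega⟩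
    obtain ⟨e, he⟩ : ∃ e, b = e + 1 := ⟨b - 1, by omega⟩
    subst hm he
    have h := Nat.add_one_mul_choose_eq m e
    simp only [Nat.add_sub_cancel]
    push_cast
    have h2 := congrArg (fun t : ℕ => (t : ℝ)) h
    push_cast at h2
    linear_combination h2
  -- abbreviations
  set C0 : ℝ := (n.choose b : ℝ) with hC0def
  set C1 : ℝ := (((n - 1).choose (b - 1) : ℕ) : ℝ) with hC1def
  set K : ℝ := C0 * (b : ℝ) * ((b : ℝ) - 1) / ((n : ℝ) * ((n : ℝ) - 1)) with hKdef
  set D : ℝ := ∑ i, f i i with hDdef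
  set S : ℝ := ‖∑ i, v i‖ ^ 2 with hSdef
  -- the exact value of the sum
  have hsum : (∑ A ∈ Finset.powersetCard b (Finset.univ : Finset (Fin n)),
        ‖(-(1 / (b : ℝ))) • ∑ i ∈ A,
            (if y i * (inner ℝ w (x i) : ℝ) < 1 then (1 : ℝ) else 0) • (y i • x i)‖ ^ 2)
      = (1 / (b:ℝ))^2 * (C1 * D + K * (S - D)) := by
    have step1 : ∀ A ∈ powersetCard b (univ : Finset (Fin n)),
        ‖(-(1 / (b : ℝ))) • ∑ i ∈ A,
            (if y i * (inner ℝ w (x i) : ℝ) < 1 then (1 : ℝ) else 0) • (y i • x i)‖ ^ 2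
          = (1 / (b:ℝ))^2 * (∑ i ∈ A, f i i + ∑ i ∈ A, ∑ j ∈ A.erase i, f i j) := by
      intro A _
      rw [sum_congr rfl fun i _ => hterm i, norm_smul, mul_pow, Real.norm_eq_abs, abs_neg,
        abs_of_nonneg (by positivity : (0:ℝ) ≤ 1 / (b:ℝ)), hexpand]
      congr 1
      rw [← sum_add_distrib]
      exact sum_congr rfl fun i hi => (add_sum_erase A (f i) hi).symm
    have hOFF : ∑ i : Fin n, ∑ j ∈ univ.erase i, f i j = S - D := by
      have h1 : D + ∑ i : Fin n, ∑ j ∈ univ.erase i, f i j = S := by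
        rw [hDdef, hSdef, hexpand univ, ← sum_add_distrib]
        exact sum_congr rfl fun i _ => add_sum_erase univ (f i) (mem_univ i)
      linarith
    rw [sum_congr rfl step1, ← mul_sum, sum_add_distrib, swap_diag, swap_offdiag]
    have hdiag : ∑ i, (((powersetCard b (univ : Finset (Fin n))).filter
          fun A => i ∈ A).card : ℝ) * f i i = C1 * D := by
      rw [hDdef, mul_sum]
      refine sum_congr rfl fun i _ => ?_
      rw [count1 b hb1 i, hC1def]
    have hcardij : ∀ i j : Fin n, j ≠ i →
        (((powersetCard b (univ : Finset (Fin n))).filter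
            fun A => i ∈ A ∧ j ∈ A).card : ℝ) = K := by
      intro i j hji
      have hc2 := count2 b i j (fun h => hji h.symm) hbn
      rw [hKdef, eq_div_iff (by positivity : ((n:ℝ) * ((n:ℝ) - 1)) ≠ 0)]
      linear_combination hc2
    have hoff : (∑ i : Fin n, ∑ j ∈ univ.erase i,
          (((powersetCard b (univ : Finset (Fin n))).filter
              fun A => i ∈ A ∧ j ∈ A).card : ℝ) * f i j) = K * (S - D) := by
      calc (∑ i : Fin n, ∑ j ∈ univ.erase i,
            (((powersetCard b (univ : Finset (Fin n))).filter
                fun A => i ∈ A ∧ j ∈ A).card : ℝ) * f i j)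
          = ∑ i : Fin n, ∑ j ∈ univ.erase i, K * f i j := by
            refine sum_congr rfl fun i _ => sum_congr rfl fun j hj => ?_
            rw [hcardij i j (mem_erase.mp hj).1]
        _ = K * ∑ i : Fin n, ∑ j ∈ univ.erase i, f i j := by
            rw [mul_sum]
            exact sum_congr rfl fun i _ => (mul_sum _ _ _).symm
        _ = K * (S - D) := by rw [hOFF]
    rw [hdiag, hoff]
  rw [hsum, hKdef]
  -- bounds
  have hD0 : 0 ≤ D := by
    rw [hDdef]
    apply sum_nonneg
    intro i _
    exact real_inner_self_nonneg
  have hDN : D ≤ (n : ℝ) := by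
    rw [hDdef]
    calc ∑ i, f i i ≤ ∑ _i : Fin n, (1:ℝ) := by
          apply sum_le_sum
          intro i _
          rw [hfdef]
          simp only []
          rw [real_inner_self_eq_norm_sq]
          nlinarith [hvnorm i, norm_nonneg (v i)]
      _ = (n : ℝ) := by simp
  have hS0 : 0 ≤ S := by rw [hSdef]; positivity
  have hSN : S ≤ (n : ℝ) * (n : ℝ) * σ2 := by
    rw [hSdef]
    have := aux_norm_sum_le n d (by omega) x X hX σ2 hσ0 hspec c hcabs
    simpa only [hvdef] using this
  have hB1 : (1:ℝ) ≤ (b:ℝ) := by exact_mod_cast hb1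
  exact final_ineq (n:ℝ) (b:ℝ) C0 C1 σ2 D S hN1 hB1 hBN hC0pos hC1 hD0 hDN hS0 hSN
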